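/- Ĵ is the unique solution of Bellman's equation within the set Ŵ: if J ∈ Ŵ satisfies J(x) = inf_{u ∈ U(x)} E_{w~P(·|x,u)}[ g(x,u,w) + J(f(x,u,w)) ] for all x ∈ X, then J = Ĵ. -/

import Mathlib

open scoped ENNReal
open Filter
open scoped Classical NNReal

/-- A stochastic shortest path (SSP) problem with state space `X`, control space `U`,
countable disturbance space `W`, a cost-free absorbing termination state `t`,
nonempty control constraint sets `Uc x ⊆ U`, disturbance distributions `P x u`,
system function `f`, and nonnegative (finite-valued) cost per stage `g`. -/
structure SSP (X U W : Type*) [Countable W] where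
  t : X
  Uc : X → Set U
  Uc_nonempty : ∀ x, (Uc x).Nonempty
  P : X → U → PMF W
  f : X → U → W → X
  g : X → U → W → ℝ≥0∞
  g_lt_top : ∀ x u w, g x u w < ⊤
  f_absorb : ∀ u ∈ Uc t, ∀ w, f t u w = t
  g_zero : ∀ u ∈ Uc t, ∀ w, g t u w = 0

namespace SSP

variable {X U W : Type*} [Countable W] (S : SSP X U W)

/-- A policy `π = (μ₀, μ₁, …)` is admissible if `μ_k(x) ∈ U(x)` for all `k, x`. -/
def IsPolicy (π : ℕ → X → U) : Prop := ∀ k x, π k x ∈ S.Uc x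

/-- Distribution of the state `x_k` after `k` steps under policy `π` starting from `x₀`. -/
noncomputable def stateDist (π : ℕ → X → U) (x₀ : X) : ℕ → PMF X
  | 0 => PMF.pure x₀
  | k + 1 => (stateDist π x₀ k).bind fun x => (S.P x (π k x)).map (S.f x (π k x))

/-- Expected value `E^π_{x₀}[J(x_k)]` of a nonnegative function along the trajectory. -/
noncomputable def expect (π : ℕ → X → U) (x₀ : X) (k : ℕ) (J : X → ℝ≥0∞) : ℝ≥0∞ :=
  ∑' x, S.stateDist π x₀ k x * J x

/-- Expected cost `E^π_{x₀}[g(x_k, μ_k(x_k), w_k)]` of the `k`-th stage. -/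
noncomputable def stageCost (π : ℕ → X → U) (x₀ : X) (k : ℕ) : ℝ≥0∞ :=
  S.expect π x₀ k fun x => ∑' w, S.P x (π k x) w * S.g x (π k x) w

/-- The cost `J_π(x₀) = Σ_{k≥0} E^π_{x₀}[g(x_k, μ_k(x_k), w_k)]` of a policy. -/
noncomputable def Jcost (π : ℕ → X → U) (x₀ : X) : ℝ≥0∞ :=
  ∑' k, S.stageCost π x₀ k

/-- `r_k(π, x₀)`: probability that `x_k ≠ t` under `π` starting from `x₀`. -/
noncomputable def r (π : ℕ → X → U) (x₀ : X) (k : ℕ) : ℝ≥0∞ :=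
  S.expect π x₀ k fun x => if x = S.t then 0 else 1

/-- `Σ_{k≥0} r_k(π,x₀)`: expected number of steps to reach the destination. -/
noncomputable def N (π : ℕ → X → U) (x₀ : X) : ℝ≥0∞ := ∑' k, S.r π x₀ k

/-- A policy is proper at `x` if it is admissible, `J_π(x) < ∞` and `Σ_k r_k(π,x) < ∞`. -/
def ProperAt (π : ℕ → X → U) (x : X) : Prop :=
  S.IsPolicy π ∧ S.Jcost π x < ⊤ ∧ S.N π x < ⊤

/-- The optimal cost function `J*`. -/
noncomputable def Jstar (x : X) : ℝ≥0∞ := ⨅ π ∈ {π | S.IsPolicy π}, S.Jcost π x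

/-- The restricted optimal cost function `Ĵ` over policies proper at `x`
(infimum over the empty set is `∞`). -/
noncomputable def Jhat (x : X) : ℝ≥0∞ := ⨅ π ∈ {π | S.ProperAt π x}, S.Jcost π x

/-- The effective domain `X̂ = {x | Ĵ(x) < ∞}` of `Ĵ`. -/
def Xhat : Set X := {x | S.Jhat x < ⊤}

/-- Expected `k`-th stage cost in the `δ`-perturbed problem (stage cost `g + δ` off `t`). -/
noncomputable def stageCostPert (δ : ℝ≥0∞) (π : ℕ → X → U) (x₀ : X) (k : ℕ) : ℝ≥0∞ :=
  S.expect π x₀ k fun x =>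
    ∑' w, S.P x (π k x) w * (S.g x (π k x) w + if x = S.t then 0 else δ)

/-- The cost `J_{π,δ}` of a policy in the `δ`-perturbed problem. -/
noncomputable def Jpert (δ : ℝ≥0∞) (π : ℕ → X → U) (x₀ : X) : ℝ≥0∞ :=
  ∑' k, S.stageCostPert δ π x₀ k

/-- The optimal cost function `Ĵ_δ` of the `δ`-perturbed problem. -/
noncomputable def JhatPert (δ : ℝ≥0∞) (x : X) : ℝ≥0∞ :=
  ⨅ π ∈ {π | S.IsPolicy π}, S.Jpert δ π x

/-- `Q J x u = E_{w∼P(·|x,u)}[g(x,u,w) + J(f(x,u,w))]`. -/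
noncomputable def Q (J : X → ℝ≥0∞) (x : X) (u : U) : ℝ≥0∞ :=
  ∑' w, S.P x u w * (S.g x u w + J (S.f x u w))

/-- The Bellman operator `(TJ)(x) = inf_{u ∈ U(x)} E[g(x,u,w) + J(f(x,u,w))]`. -/
noncomputable def bellman (J : X → ℝ≥0∞) (x : X) : ℝ≥0∞ := ⨅ u ∈ S.Uc x, S.Q J x u

/-- The tail policy `π_k = (μ_k, μ_{k+1}, …)`. -/
def tail (π : ℕ → X → U) (k : ℕ) : ℕ → X → U := fun m => π (k + m)

/-- The set `Ŵ` of functions `J` with `J(t) = 0`, `Ĵ ≤ J`, and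
`E^π_{x₀}[J(x_k)] → 0` for every pair `(π, x₀)` with `π` proper at `x₀`. -/
def What : Set (X → ℝ≥0∞) :=
  {J | J S.t = 0 ∧ S.Jhat ≤ J ∧
    ∀ π x₀, S.ProperAt π x₀ → Tendsto (fun k => S.expect π x₀ k J) atTop (nhds 0)}

/-- The set `B` of functions `J` with `J(t) = 0` that are bounded over `X̂`. -/
def Bset : Set (X → ℝ≥0∞) :=
  {J | J S.t = 0 ∧ (⨆ x ∈ S.Xhat, J x) < ⊤}

/-- A policy is uniformly proper if it is admissible and the expected number of steps
to reach the destination is uniformly bounded over `X̂`. -/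
def UniformlyProper (π : ℕ → X → U) : Prop :=
  S.IsPolicy π ∧ (⨆ x ∈ S.Xhat, S.N π x) < ⊤

/-- The cost per stage `g` is (uniformly) bounded over `X × U × W`. -/
def BoundedCost : Prop := ∃ b : ℝ≥0∞, b < ⊤ ∧ ∀ x u w, S.g x u w ≤ b

end SSP

section Aux

variable {α β : Type*}

private lemma tsum_pmf_map (q : PMF α) (g : α → β) (J : β → ℝ≥0∞) :
    ∑' y, (q.map g) y * J y = ∑' w, q w * J (g w) := by
  calc ∑' y, (q.map g) y * J y
      = ∑' y, ∑' w, (if y = g w then q w else 0) * J y := by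
        simp only [PMF.map_apply, ← ENNReal.tsum_mul_right]
    _ = ∑' w, ∑' y, (if y = g w then q w else 0) * J y := ENNReal.tsum_comm
    _ = ∑' w, ∑' y, (if y = g w then q w * J (g w) else 0) := by
        congr 1; funext w; congr 1; funext y
        by_cases h : y = g w <;> simp [h]
    _ = ∑' w, q w * J (g w) := by
        congr 1; funext w; exact tsum_ite_eq (g w) (fun _ => q w * J (g w))

private lemma tsum_pmf_bind (p : PMF α) (φ : α → PMF β) (J : β → ℝ≥0∞) :
    ∑' y, (p.bind φ) y * J y = ∑' x, p x * ∑' y, φ x y * J y := by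
  calc ∑' y, (p.bind φ) y * J y
      = ∑' y, ∑' x, p x * φ x y * J y := by
        simp only [PMF.bind_apply, ← ENNReal.tsum_mul_right]
    _ = ∑' x, ∑' y, p x * φ x y * J y := ENNReal.tsum_comm
    _ = ∑' x, p x * ∑' y, φ x y * J y := by
        simp only [mul_assoc, ENNReal.tsum_mul_left]

private lemma tsum_pmf_pure (a : α) (J : α → ℝ≥0∞) :
    ∑' y, (PMF.pure a) y * J y = J a := by
  calc ∑' y, (PMF.pure a) y * J y
      = ∑' y, if y = a then J a else 0 := by
        congr 1; funext y; simp only [PMF.pure_apply]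
        by_cases h : y = a <;> simp [h]
    _ = J a := tsum_ite_eq a (fun _ => J a)

end Aux

private lemma expect_zero {X U W : Type*} [Countable W] (S : SSP X U W)
    (π : ℕ → X → U) (x₀ : X) (J : X → ℝ≥0∞) :
    S.expect π x₀ 0 J = J x₀ := by
  simpa [SSP.expect, SSP.stateDist] using tsum_pmf_pure x₀ J

private lemma expect_succ {X U W : Type*} [Countable W] (S : SSP X U W)
    (π : ℕ → X → U) (x₀ : X) (k : ℕ) (J : X → ℝ≥0∞) :
    S.expect π x₀ (k + 1) J
      = S.expect π x₀ k (fun x => ∑' w, S.P x (π k x) w * J (S.f x (π k x) w)) := by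
  show (∑' y, (S.stateDist π x₀ (k+1)) y * J y) = _
  rw [show S.stateDist π x₀ (k+1)
      = (S.stateDist π x₀ k).bind
          (fun x => (S.P x (π k x)).map (S.f x (π k x))) from rfl,
    tsum_pmf_bind]
  unfold SSP.expect
  congr 1; funext x
  rw [tsum_pmf_map]

private lemma step_ineq {X U W : Type*} [Countable W] (S : SSP X U W)
    (π : ℕ → X → U) (hπ : S.IsPolicy π) (x₀ : X) (J : X → ℝ≥0∞)
    (hBell : ∀ x, J x = S.bellman J x) (k : ℕ) :
    S.expect π x₀ k J ≤ S.stageCost π x₀ k + S.expect π x₀ (k + 1) J := by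
  rw [expect_succ]
  unfold SSP.expect SSP.stageCost SSP.expect
  rw [← ENNReal.tsum_add]
  apply ENNReal.tsum_le_tsum
  intro x
  rw [← mul_add]
  gcongr
  have hQ : J x ≤ S.Q J x (π k x) := by
    rw [hBell x]
    exact iInf₂_le (π k x) (hπ k x)
  refine hQ.trans (le_of_eq ?_)
  unfold SSP.Q
  rw [← ENNReal.tsum_add]
  congr 1; funext w; rw [mul_add]

private lemma le_partial {X U W : Type*} [Countable W] (S : SSP X U W)
    (π : ℕ → X → U) (hπ : S.IsPolicy π) (x₀ : X) (J : X → ℝ≥0∞)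
    (hBell : ∀ x, J x = S.bellman J x) (k : ℕ) :
    J x₀ ≤ (∑ m ∈ Finset.range k, S.stageCost π x₀ m) + S.expect π x₀ k J := by
  induction k with
  | zero => simp [expect_zero]
  | succ k ih =>
      refine ih.trans ?_
      rw [Finset.sum_range_succ, add_assoc]
      exact add_le_add le_rfl (step_ineq S π hπ x₀ J hBell k)

/-- `Ĵ` is the unique solution of Bellman's equation within `Ŵ`. -/
theorem Jhat_unique_in_What {X U W : Type*} [Countable W] (S : SSP X U W) :
    ∀ J ∈ S.What, (∀ x, J x = S.bellman J x) → J = S.Jhat := by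
  intro J hJ hBell
  obtain ⟨ht, hge, htend⟩ := hJ
  funext x₀
  refine le_antisymm ?_ (hge x₀)
  refine le_iInf₂ fun π hπ => ?_
  have hlim : Tendsto (fun k => S.expect π x₀ k J) atTop (nhds 0) := htend π x₀ hπ
  have hsum : Tendsto (fun k => ∑ m ∈ Finset.range k, S.stageCost π x₀ m) atTop
      (nhds (S.Jcost π x₀)) := ENNReal.tendsto_nat_tsum _
  have htot : Tendsto
      (fun k => (∑ m ∈ Finset.range k, S.stageCost π x₀ m) + S.expect π x₀ k J)
      atTop (nhds (S.Jcost π x₀ + 0)) := hsum.add hlim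
  rw [add_zero] at htot
  exact ge_of_tendsto' htot (le_partial S π hπ.1 x₀ J hBell)
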